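/- There exists a 5-point metric space (Z, d) that is quasihypermetric but not strictly quasihypermetric and satisfies M(Z) = ∞. Concretely: Z = {x₁,x₂,y₁,y₂,y₃} with d = 1 within {x₁,x₂}, d = 4/5 within {y₁,y₂,y₃}, and d = 31/60 between the two groups. -/

import Mathlib

open Finset

noncomputable def Dst18 : Fin 5 → Fin 5 → ℝ :=
  ![![0, 1, 31/60, 31/60, 31/60],
    ![1, 0, 31/60, 31/60, 31/60],
    ![31/60, 31/60, 0, 4/5, 4/5],
    ![31/60, 31/60, 4/5, 0, 4/5],
    ![31/60, 31/60, 4/5, 4/5, 0]]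

lemma Dst18_00 : Dst18 0 0 = 0 := by
  simp only [Dst18, Matrix.cons_val_zero, Matrix.cons_val_one, Matrix.cons_val_two, Matrix.cons_val_three, Matrix.cons_val_four, Matrix.head_cons, Matrix.tail_cons]
lemma Dst18_01 : Dst18 0 1 = 1 := by
  simp only [Dst18, Matrix.cons_val_zero, Matrix.cons_val_one, Matrix.cons_val_two, Matrix.cons_val_three, Matrix.cons_val_four, Matrix.head_cons, Matrix.tail_cons]
lemma Dst18_02 : Dst18 0 2 = 31/60 := by
  simp only [Dst18, Matrix.cons_val_zero, Matrix.cons_val_one, Matrix.cons_val_two, Matrix.cons_val_three, Matrix.cons_val_four, Matrix.head_cons, Matrix.tail_cons]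
lemma Dst18_03 : Dst18 0 3 = 31/60 := by
  simp only [Dst18, Matrix.cons_val_zero, Matrix.cons_val_one, Matrix.cons_val_two, Matrix.cons_val_three, Matrix.cons_val_four, Matrix.head_cons, Matrix.tail_cons]
lemma Dst18_04 : Dst18 0 4 = 31/60 := by
  simp only [Dst18, Matrix.cons_val_zero, Matrix.cons_val_one, Matrix.cons_val_two, Matrix.cons_val_three, Matrix.cons_val_four, Matrix.head_cons, Matrix.tail_cons]
lemma Dst18_10 : Dst18 1 0 = 1 := by
  simp only [Dst18, Matrix.cons_val_zero, Matrix.cons_val_one, Matrix.cons_val_two, Matrix.cons_val_three, Matrix.cons_val_four, Matrix.head_cons, Matrix.tail_cons]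
lemma Dst18_11 : Dst18 1 1 = 0 := by
  simp only [Dst18, Matrix.cons_val_zero, Matrix.cons_val_one, Matrix.cons_val_two, Matrix.cons_val_three, Matrix.cons_val_four, Matrix.head_cons, Matrix.tail_cons]
lemma Dst18_12 : Dst18 1 2 = 31/60 := by
  simp only [Dst18, Matrix.cons_val_zero, Matrix.cons_val_one, Matrix.cons_val_two, Matrix.cons_val_three, Matrix.cons_val_four, Matrix.head_cons, Matrix.tail_cons]
lemma Dst18_13 : Dst18 1 3 = 31/60 := by
  simp only [Dst18, Matrix.cons_val_zero, Matrix.cons_val_one, Matrix.cons_val_two, Matrix.cons_val_three, Matrix.cons_val_four, Matrix.head_cons, Matrix.tail_cons]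
lemma Dst18_14 : Dst18 1 4 = 31/60 := by
  simp only [Dst18, Matrix.cons_val_zero, Matrix.cons_val_one, Matrix.cons_val_two, Matrix.cons_val_three, Matrix.cons_val_four, Matrix.head_cons, Matrix.tail_cons]
lemma Dst18_20 : Dst18 2 0 = 31/60 := by
  simp only [Dst18, Matrix.cons_val_zero, Matrix.cons_val_one, Matrix.cons_val_two, Matrix.cons_val_three, Matrix.cons_val_four, Matrix.head_cons, Matrix.tail_cons]
lemma Dst18_21 : Dst18 2 1 = 31/60 := by
  simp only [Dst18, Matrix.cons_val_zero, Matrix.cons_val_one, Matrix.cons_val_two, Matrix.cons_val_three, Matrix.cons_val_four, Matrix.head_cons, Matrix.tail_cons]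
lemma Dst18_22 : Dst18 2 2 = 0 := by
  simp only [Dst18, Matrix.cons_val_zero, Matrix.cons_val_one, Matrix.cons_val_two, Matrix.cons_val_three, Matrix.cons_val_four, Matrix.head_cons, Matrix.tail_cons]
lemma Dst18_23 : Dst18 2 3 = 4/5 := by
  simp only [Dst18, Matrix.cons_val_zero, Matrix.cons_val_one, Matrix.cons_val_two, Matrix.cons_val_three, Matrix.cons_val_four, Matrix.head_cons, Matrix.tail_cons]
lemma Dst18_24 : Dst18 2 4 = 4/5 := by
  simp only [Dst18, Matrix.cons_val_zero, Matrix.cons_val_one, Matrix.cons_val_two, Matrix.cons_val_three, Matrix.cons_val_four, Matrix.head_cons, Matrix.tail_cons]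
lemma Dst18_30 : Dst18 3 0 = 31/60 := by
  simp only [Dst18, Matrix.cons_val_zero, Matrix.cons_val_one, Matrix.cons_val_two, Matrix.cons_val_three, Matrix.cons_val_four, Matrix.head_cons, Matrix.tail_cons]
lemma Dst18_31 : Dst18 3 1 = 31/60 := by
  simp only [Dst18, Matrix.cons_val_zero, Matrix.cons_val_one, Matrix.cons_val_two, Matrix.cons_val_three, Matrix.cons_val_four, Matrix.head_cons, Matrix.tail_cons]
lemma Dst18_32 : Dst18 3 2 = 4/5 := by
  simp only [Dst18, Matrix.cons_val_zero, Matrix.cons_val_one, Matrix.cons_val_two, Matrix.cons_val_three, Matrix.cons_val_four, Matrix.head_cons, Matrix.tail_cons]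
lemma Dst18_33 : Dst18 3 3 = 0 := by
  simp only [Dst18, Matrix.cons_val_zero, Matrix.cons_val_one, Matrix.cons_val_two, Matrix.cons_val_three, Matrix.cons_val_four, Matrix.head_cons, Matrix.tail_cons]
lemma Dst18_34 : Dst18 3 4 = 4/5 := by
  simp only [Dst18, Matrix.cons_val_zero, Matrix.cons_val_one, Matrix.cons_val_two, Matrix.cons_val_three, Matrix.cons_val_four, Matrix.head_cons, Matrix.tail_cons]
lemma Dst18_40 : Dst18 4 0 = 31/60 := by
  simp only [Dst18, Matrix.cons_val_zero, Matrix.cons_val_one, Matrix.cons_val_two, Matrix.cons_val_three, Matrix.cons_val_four, Matrix.head_cons, Matrix.tail_cons]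
lemma Dst18_41 : Dst18 4 1 = 31/60 := by
  simp only [Dst18, Matrix.cons_val_zero, Matrix.cons_val_one, Matrix.cons_val_two, Matrix.cons_val_three, Matrix.cons_val_four, Matrix.head_cons, Matrix.tail_cons]
lemma Dst18_42 : Dst18 4 2 = 4/5 := by
  simp only [Dst18, Matrix.cons_val_zero, Matrix.cons_val_one, Matrix.cons_val_two, Matrix.cons_val_three, Matrix.cons_val_four, Matrix.head_cons, Matrix.tail_cons]
lemma Dst18_43 : Dst18 4 3 = 4/5 := by
  simp only [Dst18, Matrix.cons_val_zero, Matrix.cons_val_one, Matrix.cons_val_two, Matrix.cons_val_three, Matrix.cons_val_four, Matrix.head_cons, Matrix.tail_cons]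
lemma Dst18_44 : Dst18 4 4 = 0 := by
  simp only [Dst18, Matrix.cons_val_zero, Matrix.cons_val_one, Matrix.cons_val_two, Matrix.cons_val_three, Matrix.cons_val_four, Matrix.head_cons, Matrix.tail_cons]

lemma finmk2 (h : 2 < 5) : (⟨2, h⟩ : Fin 5) = 2 := rfl
lemma finmk3 (h : 3 < 5) : (⟨3, h⟩ : Fin 5) = 3 := rfl
lemma finmk4 (h : 4 < 5) : (⟨4, h⟩ : Fin 5) = 4 := rfl

/-- There exists a 5-point metric space that is quasihypermetric but not strictly
quasihypermetric and has `M(Z) = ∞`: take distances 1 within a 2-point group, 4/5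
within a 3-point group, and 31/60 between the groups. -/
theorem stmt18 :
    ∃ d : Fin 5 → Fin 5 → ℝ,
      (∀ i, d i i = 0) ∧ (∀ i j, d i j = d j i) ∧ (∀ i j, i ≠ j → 0 < d i j) ∧
      (∀ i j k, d i k ≤ d i j + d j k) ∧
      (∀ α : Fin 5 → ℝ, ∑ i, α i = 0 → ∑ i, ∑ j, α i * α j * d i j ≤ 0) ∧
      ¬ (∀ α : Fin 5 → ℝ, ∑ i, α i = 0 →
          (∑ i, ∑ j, α i * α j * d i j = 0 → α = 0)) ∧
      ¬ BddAbove {r : ℝ | ∃ μ : Fin 5 → ℝ, ∑ i, μ i = 1 ∧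
          ∑ i, ∑ j, μ i * μ j * d i j = r} := by
  refine ⟨Dst18, ?_, ?_, ?_, ?_, ?_, ?_, ?_⟩
  · intro i
    fin_cases i <;> simp only [finmk2, finmk3, finmk4] <;> norm_num [Dst18_00, Dst18_01, Dst18_02, Dst18_03, Dst18_04, Dst18_10, Dst18_11, Dst18_12, Dst18_13, Dst18_14, Dst18_20, Dst18_21, Dst18_22, Dst18_23, Dst18_24, Dst18_30, Dst18_31, Dst18_32, Dst18_33, Dst18_34, Dst18_40, Dst18_41, Dst18_42, Dst18_43, Dst18_44]
  · intro i j
    fin_cases i <;> fin_cases j <;> simp only [finmk2, finmk3, finmk4] <;> norm_num [Dst18_00, Dst18_01, Dst18_02, Dst18_03, Dst18_04, Dst18_10, Dst18_11, Dst18_12, Dst18_13, Dst18_14, Dst18_20, Dst18_21, Dst18_22, Dst18_23, Dst18_24, Dst18_30, Dst18_31, Dst18_32, Dst18_33, Dst18_34, Dst18_40, Dst18_41, Dst18_42, Dst18_43, Dst18_44]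
  · intro i j h
    fin_cases i <;> fin_cases j <;>
      simp only [finmk2, finmk3, finmk4] <;>
      first
        | exact absurd rfl h
        | norm_num [Dst18_00, Dst18_01, Dst18_02, Dst18_03, Dst18_04, Dst18_10, Dst18_11, Dst18_12, Dst18_13, Dst18_14, Dst18_20, Dst18_21, Dst18_22, Dst18_23, Dst18_24, Dst18_30, Dst18_31, Dst18_32, Dst18_33, Dst18_34, Dst18_40, Dst18_41, Dst18_42, Dst18_43, Dst18_44]
  · intro i j k
    fin_cases i <;> fin_cases j <;> fin_cases k <;> simp only [finmk2, finmk3, finmk4] <;> norm_num [Dst18_00, Dst18_01, Dst18_02, Dst18_03, Dst18_04, Dst18_10, Dst18_11, Dst18_12, Dst18_13, Dst18_14, Dst18_20, Dst18_21, Dst18_22, Dst18_23, Dst18_24, Dst18_30, Dst18_31, Dst18_32, Dst18_33, Dst18_34, Dst18_40, Dst18_41, Dst18_42, Dst18_43, Dst18_44]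
  · intro α h
    simp only [Fin.sum_univ_five, Dst18_00, Dst18_01, Dst18_02, Dst18_03, Dst18_04, Dst18_10, Dst18_11, Dst18_12, Dst18_13, Dst18_14, Dst18_20, Dst18_21, Dst18_22, Dst18_23, Dst18_24, Dst18_30, Dst18_31, Dst18_32, Dst18_33, Dst18_34, Dst18_40, Dst18_41, Dst18_42, Dst18_43, Dst18_44] at h ⊢
    have h4 : α 4 = -(α 0 + α 1 + α 2 + α 3) := by linarith
    rw [h4]
    nlinarith [sq_nonneg (α 0 - α 1), sq_nonneg (α 2 - α 3),
      sq_nonneg (α 2 + (α 0 + α 1 + α 2 + α 3)), sq_nonneg (α 3 + (α 0 + α 1 + α 2 + α 3))]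
  · intro hall
    have := hall ![3, 3, -2, -2, -2] (by norm_num [Fin.sum_univ_five, Matrix.cons_val_two, Matrix.cons_val_three, Matrix.cons_val_four, Matrix.tail_cons, Matrix.head_cons])
      (by simp only [Fin.sum_univ_five, Dst18_00, Dst18_01, Dst18_02, Dst18_03, Dst18_04, Dst18_10, Dst18_11, Dst18_12, Dst18_13, Dst18_14, Dst18_20, Dst18_21, Dst18_22, Dst18_23, Dst18_24, Dst18_30, Dst18_31, Dst18_32, Dst18_33, Dst18_34, Dst18_40, Dst18_41, Dst18_42, Dst18_43, Dst18_44]; norm_num [Matrix.cons_val_two, Matrix.cons_val_three, Matrix.cons_val_four, Matrix.tail_cons, Matrix.head_cons])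
    have h0 := congrFun this 0
    norm_num at h0
  · intro ⟨c, hc⟩
    have hmem : (c + 1) ∈ {r : ℝ | ∃ μ : Fin 5 → ℝ, ∑ i, μ i = 1 ∧
        ∑ i, ∑ j, μ i * μ j * Dst18 i j = r} := by
      refine ⟨![1 + 3 * (-5*(c+1)), 3 * (-5*(c+1)), -2 * (-5*(c+1)),
        -2 * (-5*(c+1)), -2 * (-5*(c+1))], ?_, ?_⟩
      · simp only [Fin.sum_univ_five, Matrix.cons_val_zero, Matrix.cons_val_one,
          Matrix.cons_val_two, Matrix.cons_val_three, Matrix.cons_val_four,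
          Matrix.head_cons, Matrix.tail_cons]
        ring
      · simp only [Fin.sum_univ_five, Dst18_00, Dst18_01, Dst18_02, Dst18_03, Dst18_04, Dst18_10, Dst18_11, Dst18_12, Dst18_13, Dst18_14, Dst18_20, Dst18_21, Dst18_22, Dst18_23, Dst18_24, Dst18_30, Dst18_31, Dst18_32, Dst18_33, Dst18_34, Dst18_40, Dst18_41, Dst18_42, Dst18_43, Dst18_44, Matrix.cons_val_zero, Matrix.cons_val_one,
          Matrix.cons_val_two, Matrix.cons_val_three, Matrix.cons_val_four,
          Matrix.head_cons, Matrix.tail_cons]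
        ring
    have := hc hmem
    linarith
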